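/- D(Φ) = ℓ^{nℓ^n}·(4 − t²)^{(ℓ^n−1)/2}; that is, the discriminant of the polynomial Φ(x) = T_ℓ^n(x) − t (equivalently, the discriminant of the ℚ-basis 1, θ, …, θ^{ℓ^n−1} of K) equals ℓ^{nℓ^n}·(4 − t²)^{(ℓ^n−1)/2}. -/

import Mathlib

open Polynomial

/-- The monic Chebyshev polynomial of the first kind of degree `d`,
the unique monic integer polynomial with `T_d(z + z⁻¹) = z^d + z^{-d}`. -/
noncomputable def chebT (d : ℕ) : Polynomial ℤ := Polynomial.dickson 1 1 d

/-- The `n`-fold composition `T_ℓ ∘ ⋯ ∘ T_ℓ` of the monic Chebyshev polynomial. -/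
noncomputable def chebTIter (ℓ n : ℕ) : Polynomial ℤ :=
  ((chebT ℓ).comp)^[n] Polynomial.X

namespace Cheb5

/-- T_{n+2} = U_{n+2} - U_n over ℤ. -/
lemma T_eq_U_sub_U (n : ℕ) :
    (dickson 1 1 (n + 2) : Polynomial ℤ) = dickson 2 1 (n + 2) - dickson 2 1 n := by
  induction n using Nat.twoStepInduction with
  | zero =>
      simp only [dickson_add_two, dickson_one, dickson_zero, zero_add, C_1]
      ring
  | one =>
      simp only [dickson_add_two, dickson_one, dickson_zero, zero_add, C_1]
      ring
  | more n ih1 ih2 =>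
      rw [show n + 2 + 2 = (n + 2) + 2 from rfl, dickson_add_two,
        show n + 2 + 1 = (n + 1) + 2 from rfl, ih2, ih1,
        dickson_add_two 2 1 (n + 2), dickson_add_two 2 1 n]
      ring

/-- derivative T_{n+1} = (n+1) U_n over ℤ. -/
lemma deriv_T (n : ℕ) :
    derivative (dickson 1 1 (n + 1) : Polynomial ℤ) = C ((n : ℤ) + 1) * dickson 2 1 n := by
  induction n using Nat.twoStepInduction with
  | zero => simp [dickson_one, dickson_zero]; norm_num
  | one =>
      simp only [dickson_add_two, dickson_one, dickson_zero, zero_add, C_1, derivative_sub,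
        derivative_mul, derivative_X, derivative_one]
      norm_num
      ring
  | more n ih1 ih2 =>
      rw [show n + 2 + 1 = (n + 1) + 2 from rfl, dickson_add_two]
      simp only [C_1, one_mul, derivative_sub, derivative_mul, derivative_X]
      rw [ih1, show n + 1 + 1 = n + 2 from rfl, ih2,
        T_eq_U_sub_U n, dickson_add_two 2 1 n]
      simp only [map_add, map_one, map_natCast, map_ofNat, Nat.cast_add, Nat.cast_one,
        Nat.cast_ofNat]
      ring

lemma iter_eq (ℓ n : ℕ) : chebTIter ℓ n = dickson 1 1 (ℓ ^ n) := by
  induction n with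
  | zero => simp [chebTIter, dickson_one]
  | succ n ih =>
      rw [chebTIter, Function.iterate_succ_apply', ← chebTIter, ih, chebT,
        ← dickson_one_one_mul, pow_succ, mul_comm]


open Complex in
lemma U_monic_natDegree : ∀ N : ℕ,
    (dickson 2 1 N : Polynomial ℂ).Monic ∧ (dickson 2 1 N : Polynomial ℂ).natDegree = N := by
  intro N
  induction N using Nat.twoStepInduction with
  | zero =>
      have h : (dickson 2 1 0 : Polynomial ℂ) = 1 := by rw [dickson_zero]; norm_num
      rw [h]; exact ⟨monic_one, natDegree_one⟩
  | one => rw [dickson_one]; exact ⟨monic_X, natDegree_X⟩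
  | more N ih1 ih2 =>
      rw [dickson_add_two, C_1, one_mul]
      have hm : (X * dickson 2 1 (N + 1) : Polynomial ℂ).Monic := monic_X.mul ih2.1
      have hd : (X * dickson 2 1 (N + 1) : Polynomial ℂ).natDegree = N + 2 := by
        rw [(monic_X (R := ℂ)).natDegree_mul ih2.1, natDegree_X, ih2.2]
        omega
      have hlt : (dickson 2 1 N : Polynomial ℂ).natDegree <
          (X * dickson 2 1 (N + 1) : Polynomial ℂ).natDegree := by
        rw [hd, ih1.2]; omega
      refine ⟨?_, ?_⟩
      · rw [sub_eq_add_neg]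
        exact hm.add_of_left (by rw [degree_neg]; exact degree_lt_degree hlt)
      · rw [natDegree_sub_eq_left_of_natDegree_lt hlt, hd]

lemma U_eval (n : ℕ) {w v : ℂ} (h : w * v = 1) :
    (w ^ 2 - 1) * ((dickson 2 1 n : Polynomial ℂ).eval (w + v)) =
      w * (w ^ (n + 1) - v ^ (n + 1)) := by
  induction n using Nat.twoStepInduction with
  | zero =>
      have h0 : (dickson 2 1 0 : Polynomial ℂ) = 1 := by rw [dickson_zero]; norm_num
      rw [h0, eval_one]
      linear_combination h
  | one =>
      rw [dickson_one, eval_X]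
      linear_combination (w + v) * h
  | more n ih1 ih2 =>
      rw [dickson_add_two, C_1, one_mul, eval_sub, eval_mul, eval_X]
      linear_combination (w + v) * ih2 - ih1 + (w ^ (n + 2) - w * v ^ (n + 1)) * h

lemma prod_t (t : ℂ) (m : ℕ) :
    ∏ j ∈ Finset.Ico 1 (2 * m + 1), (t - 2 * (-1 : ℂ) ^ j) = (t ^ 2 - 4) ^ m := by
  induction m with
  | zero => simp
  | succ m ih =>
      rw [show 2 * (m + 1) + 1 = (2 * m + 1) + 1 + 1 from by ring,
        Finset.prod_Ico_succ_top (by omega), Finset.prod_Ico_succ_top (by omega), ih]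
      have h1 : ((-1 : ℂ)) ^ (2 * m + 1) = -1 := by
        rw [pow_succ, pow_mul]; norm_num
      have h2 : ((-1 : ℂ)) ^ (2 * m + 1 + 1) = 1 := by
        rw [pow_succ, h1]; norm_num
      rw [h1, h2, pow_succ]
      ring


open Complex in
lemma U_factor (D : ℕ) (hD1 : 1 ≤ D) :
    ∃ b : ℕ → ℂ,
      (∀ j, Polynomial.eval (b j) (dickson 1 1 D : Polynomial ℂ) = 2 * (-1) ^ j) ∧
      (dickson 2 1 (D - 1) : Polynomial ℂ) = ∏ j ∈ Finset.Ico 1 D, (X - C (b j)) := by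
  classical
  have hD0 : (D : ℂ) ≠ 0 := Nat.cast_ne_zero.mpr (by omega)
  set z : ℕ → ℂ := fun j => Complex.exp ((j : ℂ) * Real.pi / D * Complex.I) with hzdef
  have hz0 : ∀ j, z j ≠ 0 := fun j => Complex.exp_ne_zero _
  set b : ℕ → ℂ := fun j => z j + (z j)⁻¹ with hbdef
  have hzD : ∀ j, z j ^ D = (-1 : ℂ) ^ j := by
    intro j
    rw [hzdef]
    rw [← Complex.exp_nat_mul]
    have h : (D : ℂ) * ((j : ℂ) * Real.pi / D * Complex.I) = (j : ℂ) * (Real.pi * Complex.I) := by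
      field_simp
    rw [h, Complex.exp_nat_mul, Complex.exp_pi_mul_I]
  have hinv : ∀ j : ℕ, ((-1 : ℂ) ^ j)⁻¹ = (-1 : ℂ) ^ j := by
    intro j; rw [← inv_pow]; norm_num
  have hbT : ∀ j, Polynomial.eval (b j) (dickson 1 1 D : Polynomial ℂ) = 2 * (-1) ^ j := by
    intro j
    rw [hbdef]
    rw [dickson_one_one_eval_add_inv (z j) (z j)⁻¹ (mul_inv_cancel₀ (hz0 j)), inv_pow, hzD j,
      hinv j]
    ring
  have hzsq : ∀ j ∈ Finset.Ico 1 D, z j ^ 2 - 1 ≠ 0 := by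
    intro j hj h
    rw [Finset.mem_Ico] at hj
    have h2 : z j ^ 2 = 1 := by linear_combination h
    rw [hzdef, ← Complex.exp_nat_mul, Complex.exp_eq_one_iff] at h2
    obtain ⟨k, hk⟩ := h2
    have hπ : (Real.pi : ℂ) ≠ 0 := by
      exact_mod_cast Complex.ofReal_ne_zero.mpr Real.pi_ne_zero
    have hI : Complex.I ≠ 0 := Complex.I_ne_zero
    have h2πI : (2 : ℂ) * Real.pi * Complex.I ≠ 0 :=
      mul_ne_zero (mul_ne_zero two_ne_zero hπ) hI
    have h4 : ((j : ℂ) / D) * (2 * Real.pi * Complex.I) = (k : ℂ) * (2 * Real.pi * Complex.I) := by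
      push_cast at hk ⊢
      linear_combination hk
    have h5 : (j : ℂ) / D = (k : ℂ) := mul_right_cancel₀ h2πI h4
    have hjk : (j : ℂ) = k * D := by
      field_simp at h5
      linear_combination h5
    have hjk' : (j : ℤ) = k * D := by exact_mod_cast hjk
    have hdvd : (D : ℤ) ∣ (j : ℤ) := ⟨k, by linarith⟩
    have : D ∣ j := by exact_mod_cast hdvd
    have := Nat.le_of_dvd (by omega) this
    omega
  have hbU : ∀ j ∈ Finset.Ico 1 D, Polynomial.eval (b j) (dickson 2 1 (D - 1) : Polynomial ℂ) = 0 := by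
    intro j hj
    have hU := U_eval (D - 1) (mul_inv_cancel₀ (hz0 j))
    rw [Nat.sub_add_cancel hD1, inv_pow, hzD j, hinv j, sub_self, mul_zero] at hU
    have := mul_eq_zero.mp hU
    rcases this with h | h
    · exact absurd h (hzsq j hj)
    · exact h
  have b_real : ∀ j : ℕ, b j = ((2 * Real.cos (j * Real.pi / D) : ℝ) : ℂ) := by
    intro j
    have hθ : ((j * Real.pi / D : ℝ) : ℂ) = (j : ℂ) * Real.pi / D := by push_cast; ring
    rw [hbdef]
    show z j + (z j)⁻¹ = _
    rw [hzdef]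
    simp only
    rw [← hθ, ← Complex.exp_neg, ← neg_mul, ← Complex.two_cos, ← Complex.ofReal_cos]
    push_cast
    ring
  have hbinj : ∀ j ∈ Finset.Ico 1 D, ∀ j' ∈ Finset.Ico 1 D, b j = b j' → j = j' := by
    intro j hj j' hj' hEq
    rw [Finset.mem_Ico] at hj hj'
    rw [b_real j, b_real j'] at hEq
    have h2 : (2 * Real.cos (j * Real.pi / D) : ℝ) = 2 * Real.cos (j' * Real.pi / D) := by
      exact_mod_cast hEq
    have hcos : Real.cos (j * Real.pi / D) = Real.cos (j' * Real.pi / D) := by linarith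
    have hDpos : (0 : ℝ) < D := by exact_mod_cast Nat.pos_of_ne_zero (by omega)
    have hπpos := Real.pi_pos
    have harg : ∀ i : ℕ, i < D → (i : ℝ) * Real.pi / D ∈ Set.Icc (0 : ℝ) Real.pi := by
      intro i hi
      constructor
      · positivity
      · rw [div_le_iff₀ hDpos]
        have : (i : ℝ) ≤ D := by exact_mod_cast hi.le
        nlinarith
    have heq := Real.injOn_cos (harg j hj.2) (harg j' hj'.2) hcos
    field_simp at heq
    exact_mod_cast heq
  -- factorization
  refine ⟨b, hbT, ?_⟩
  have hP := U_monic_natDegree (D - 1)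
  have hPne : (dickson 2 1 (D - 1) : Polynomial ℂ) ≠ 0 := hP.1.ne_zero
  set M : Multiset ℂ := (Finset.Ico 1 D).val.map b with hMdef
  have hnodup : M.Nodup := by
    rw [hMdef]
    refine Multiset.Nodup.map_on ?_ (Finset.Ico 1 D).nodup
    intro x hx y hy hxy
    exact hbinj x (Finset.mem_def.mpr hx) y (Finset.mem_def.mpr hy) hxy
  have hMle : M ≤ (dickson 2 1 (D - 1) : Polynomial ℂ).roots := by
    rw [Multiset.le_iff_subset hnodup]
    intro a ha
    rw [hMdef, Multiset.mem_map] at ha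
    obtain ⟨j, hj, rfl⟩ := ha
    rw [Polynomial.mem_roots']
    exact ⟨hPne, hbU j (Finset.mem_def.mpr hj)⟩
  have hcardM : Multiset.card M = D - 1 := by
    rw [hMdef, Multiset.card_map]
    exact Nat.card_Ico 1 D
  have hroots : (dickson 2 1 (D - 1) : Polynomial ℂ).roots = M := by
    refine (Multiset.eq_of_le_of_card_le hMle ?_).symm
    rw [hcardM]
    calc Multiset.card (dickson 2 1 (D - 1) : Polynomial ℂ).roots
        ≤ (dickson 2 1 (D - 1) : Polynomial ℂ).natDegree := Polynomial.card_roots' _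
      _ = D - 1 := hP.2
  have hsplit := (IsAlgClosed.splits _).eq_prod_roots_of_monic hP.1
  rw [hsplit, hroots, hMdef, Multiset.map_map]
  rfl

end Cheb5

open Cheb5 in
theorem stmt5 (ℓ : ℕ) (hℓ : ℓ.Prime) (hodd : Odd ℓ) (n : ℕ) (hn : 1 ≤ n) (t : ℤ)
    (hirr : Irreducible ((chebTIter ℓ n - C t).map (Int.castRingHom ℚ)))
    (θ : Fin (ℓ ^ n) → ℂ)
    (hroots : (chebTIter ℓ n - C t).map (Int.castRingHom ℂ) =
      ∏ i, (X - C (θ i))) :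
    (∏ i, ∏ j ∈ Finset.univ.filter (fun j => i < j), (θ j - θ i) ^ 2) =
      (ℓ : ℂ) ^ (n * ℓ ^ n) * (4 - (t : ℂ) ^ 2) ^ ((ℓ ^ n - 1) / 2) := by
  have hoddD : Odd (ℓ ^ n) := hodd.pow
  obtain ⟨m, hm⟩ := hoddD
  have hoddD : Odd (ℓ ^ n) := ⟨m, hm⟩
  have hD1 : 1 ≤ ℓ ^ n := Nat.one_le_pow n ℓ hℓ.pos
  obtain ⟨b, hbT, hUfact⟩ := Cheb5.U_factor (ℓ ^ n) hD1
  set Ψ : Polynomial ℂ := (chebTIter ℓ n - C t).map (Int.castRingHom ℂ) with hΨdef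
  have h_map_iter : (chebTIter ℓ n).map (Int.castRingHom ℂ) = dickson 1 1 (ℓ ^ n) := by
    rw [iter_eq, map_dickson, map_one]
  have hΨ : Ψ = (dickson 1 1 (ℓ ^ n) : Polynomial ℂ) - C (t : ℂ) := by
    rw [hΨdef, Polynomial.map_sub, h_map_iter, map_C]
    norm_num
  -- derivative over ℤ
  have hder1 : derivative (dickson 1 1 (ℓ ^ n) : Polynomial ℤ) =
      C ((ℓ ^ n : ℕ) : ℤ) * dickson 2 1 (ℓ ^ n - 1) := by
    conv_lhs => rw [show ℓ ^ n = (ℓ ^ n - 1) + 1 from by omega]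
    rw [deriv_T]
    congr 1
    rw [show ((ℓ ^ n - 1 : ℕ) : ℤ) = ((ℓ ^ n : ℕ) : ℤ) - 1 by
      rw [Nat.cast_sub hD1]; norm_num]
    ring
  have hder : derivative Ψ =
      C ((ℓ ^ n : ℕ) : ℂ) * ∏ j ∈ Finset.Ico 1 (ℓ ^ n), (X - C (b j)) := by
    rw [hΨdef, derivative_map, derivative_sub, derivative_C, sub_zero, iter_eq, hder1,
      Polynomial.map_mul, map_C, map_dickson, map_one, hUfact]
    norm_num
  -- the common quantity
  have hA_left : (∏ i, Polynomial.eval (θ i) (derivative Ψ)) =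
      ∏ i, ∏ jj ∈ Finset.univ.erase i, (θ i - θ jj) := by
    have hnodal : Ψ = Lagrange.nodal Finset.univ θ := by
      rw [hroots]
      exact (Lagrange.nodal_eq _ _).symm
    refine Finset.prod_congr rfl fun i _ => ?_
    rw [hnodal, Lagrange.eval_nodal_derivative_eval_node_eq (Finset.mem_univ i),
      Lagrange.eval_nodal]
  have hevalΨ : ∀ x : ℂ, Polynomial.eval x Ψ = ∏ i, (x - θ i) := by
    intro x
    rw [hroots, Polynomial.eval_prod]
    simp
  have hA_right : (∏ i, Polynomial.eval (θ i) (derivative Ψ)) =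
      ((ℓ ^ n : ℕ) : ℂ) ^ (ℓ ^ n) * ((t : ℂ) ^ 2 - 4) ^ m := by
    have step1 : (∏ i, Polynomial.eval (θ i) (derivative Ψ)) =
        ((ℓ ^ n : ℕ) : ℂ) ^ (ℓ ^ n) *
          ∏ j ∈ Finset.Ico 1 (ℓ ^ n), ∏ i, (θ i - b j) := by
      have : ∀ i : Fin (ℓ ^ n), Polynomial.eval (θ i) (derivative Ψ) =
          ((ℓ ^ n : ℕ) : ℂ) * ∏ j ∈ Finset.Ico 1 (ℓ ^ n), (θ i - b j) := by
        intro i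
        rw [hder, eval_mul, eval_C, Polynomial.eval_prod]
        simp
      rw [Finset.prod_congr rfl fun i _ => this i, Finset.prod_mul_distrib,
        Finset.prod_const, Finset.card_univ, Fintype.card_fin, Finset.prod_comm]
    have step2 : ∀ j : ℕ, (∏ i, (θ i - b j)) = -(2 * (-1 : ℂ) ^ j - (t : ℂ)) := by
      intro j
      have h1 : (∏ i, (θ i - b j)) = (-1 : ℂ) ^ (ℓ ^ n) * ∏ i, (b j - θ i) := by
        have h0 : (∏ i : Fin (ℓ ^ n), (θ i - b j)) =
            ∏ i : Fin (ℓ ^ n), (-1 : ℂ) * (b j - θ i) :=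
          Finset.prod_congr rfl fun i _ => by ring
        rw [h0, Finset.prod_mul_distrib, Finset.prod_const, Finset.card_univ, Fintype.card_fin]
      have h2 : (∏ i, (b j - θ i)) = 2 * (-1 : ℂ) ^ j - (t : ℂ) := by
        rw [← hevalΨ, hΨ, eval_sub, eval_C, hbT]
      rw [h1, h2, hoddD.neg_one_pow]
      ring
    rw [step1, Finset.prod_congr rfl fun j _ => step2 j]
    have : (∏ j ∈ Finset.Ico 1 (ℓ ^ n), -(2 * (-1 : ℂ) ^ j - (t : ℂ))) =
        ∏ j ∈ Finset.Ico 1 (ℓ ^ n), ((t : ℂ) - 2 * (-1 : ℂ) ^ j) := by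
      refine Finset.prod_congr rfl fun j _ => ?_
      ring
    rw [this, hm, prod_t]
  -- combinatorics
  have hsplit : ∀ i : Fin (ℓ ^ n), Finset.univ.erase i =
      (Finset.univ.filter (fun j => j < i)) ∪ (Finset.univ.filter (fun j => i < j)) := by
    intro i
    ext x
    simp only [Finset.mem_erase, Finset.mem_union, Finset.mem_filter, Finset.mem_univ,
      true_and, and_true]
    constructor
    · intro h; exact lt_or_gt_of_ne h
    · rintro (h | h)
      · exact ne_of_lt h
      · exact ne_of_gt h
  have hdisj : ∀ i : Fin (ℓ ^ n),
      Disjoint (Finset.univ.filter (fun j => j < i)) (Finset.univ.filter (fun j => i < j)) := by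
    intro i
    rw [Finset.disjoint_left]
    intro x hx hx'
    simp only [Finset.mem_filter, Finset.mem_univ, true_and] at hx hx'
    exact absurd (hx.trans hx') (lt_irrefl x)
  have hstep : (∏ i, ∏ jj ∈ Finset.univ.erase i, (θ i - θ jj)) =
      (∏ i, ∏ j ∈ Finset.univ.filter (fun j => i < j), (θ j - θ i)) *
      (∏ i, ∏ j ∈ Finset.univ.filter (fun j => i < j), (θ i - θ j)) := by
    have h1 : ∀ i : Fin (ℓ ^ n), (∏ jj ∈ Finset.univ.erase i, (θ i - θ jj)) =
        (∏ j ∈ Finset.univ.filter (fun j => j < i), (θ i - θ j)) *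
        (∏ j ∈ Finset.univ.filter (fun j => i < j), (θ i - θ j)) := by
      intro i
      rw [hsplit i, Finset.prod_union (hdisj i)]
    rw [Finset.prod_congr rfl fun i _ => h1 i, Finset.prod_mul_distrib]
    congr 1
    refine Finset.prod_comm' ?_
    intro x y
    simp only [Finset.mem_filter, Finset.mem_univ, true_and, and_true]
  have hcard : ∀ i : Fin (ℓ ^ n),
      (Finset.univ.filter (fun j => i < j)).card = ℓ ^ n - 1 - (i : ℕ) := by
    intro i
    have h0 : Finset.univ.filter (fun j => i < j) = Finset.Ioi i := by
      ext x
      simp [Finset.mem_Ioi]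
    rw [h0, Fin.card_Ioi]
  have hsum : (∑ i : Fin (ℓ ^ n), (Finset.univ.filter (fun j => i < j)).card) = ℓ ^ n * m := by
    rw [Finset.sum_congr rfl fun i _ => hcard i]
    have h2 : (∑ i : Fin (ℓ ^ n), (ℓ ^ n - 1 - (i : ℕ))) =
        ∑ k ∈ Finset.range (ℓ ^ n), (ℓ ^ n - 1 - k) := Fin.sum_univ_eq_sum_range _ _
    have h3 := Finset.sum_range_reflect (fun k => k) (ℓ ^ n)
    have h4 := Finset.sum_range_id_mul_two (ℓ ^ n)
    have h5 : ℓ ^ n * (ℓ ^ n - 1) = (ℓ ^ n * m) * 2 := by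
      rw [show ℓ ^ n - 1 = 2 * m from by omega]
      ring
    refine Nat.eq_of_mul_eq_mul_right (by norm_num : 0 < 2) ?_
    rw [h2, h3, h4, h5]
  have hpair : (∏ i, ∏ j ∈ Finset.univ.filter (fun j => i < j), (θ j - θ i)) *
      (∏ i, ∏ j ∈ Finset.univ.filter (fun j => i < j), (θ i - θ j)) =
      (-1 : ℂ) ^ (ℓ ^ n * m) *
        ∏ i, ∏ j ∈ Finset.univ.filter (fun j => i < j), (θ j - θ i) ^ 2 := by
    rw [← Finset.prod_mul_distrib]
    have h1 : ∀ i : Fin (ℓ ^ n),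
        (∏ j ∈ Finset.univ.filter (fun j => i < j), (θ j - θ i)) *
        (∏ j ∈ Finset.univ.filter (fun j => i < j), (θ i - θ j)) =
        ((-1 : ℂ) ^ (Finset.univ.filter (fun j => i < j)).card) *
          ∏ j ∈ Finset.univ.filter (fun j => i < j), (θ j - θ i) ^ 2 := by
      intro i
      rw [← Finset.prod_mul_distrib]
      have h0 : (∏ j ∈ Finset.univ.filter (fun j => i < j), ((θ j - θ i) * (θ i - θ j))) =
          ∏ j ∈ Finset.univ.filter (fun j => i < j), ((-1 : ℂ) * (θ j - θ i) ^ 2) :=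
        Finset.prod_congr rfl fun j _ => by ring
      rw [h0, Finset.prod_mul_distrib, Finset.prod_const]
    rw [Finset.prod_congr rfl fun i _ => h1 i, Finset.prod_mul_distrib,
      Finset.prod_pow_eq_pow_sum, hsum]
  have hmain : (-1 : ℂ) ^ (ℓ ^ n * m) *
      (∏ i, ∏ j ∈ Finset.univ.filter (fun j => i < j), (θ j - θ i) ^ 2) =
      ((ℓ ^ n : ℕ) : ℂ) ^ (ℓ ^ n) * ((t : ℂ) ^ 2 - 4) ^ m := by
    rw [← hpair, ← hstep, ← hA_left, hA_right]
  have hsign : ((-1 : ℂ)) ^ (ℓ ^ n * m) = (-1 : ℂ) ^ m := by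
    rw [pow_mul, hoddD.neg_one_pow]
  have hmm : ((-1 : ℂ)) ^ m * ((-1 : ℂ)) ^ m = 1 := by
    rw [← pow_add, ← two_mul, pow_mul]
    norm_num
  have hexp : (ℓ ^ n - 1) / 2 = m := by omega
  have hcast : ((ℓ ^ n : ℕ) : ℂ) ^ (ℓ ^ n) = (ℓ : ℂ) ^ (n * ℓ ^ n) := by
    rw [Nat.cast_pow, ← pow_mul]
  have hneg : ((-1 : ℂ)) ^ m * ((t : ℂ) ^ 2 - 4) ^ m = (4 - (t : ℂ) ^ 2) ^ m := by
    rw [← mul_pow]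
    congr 1
    ring
  rw [hsign] at hmain
  rw [hexp]
  calc (∏ i, ∏ j ∈ Finset.univ.filter (fun j => i < j), (θ j - θ i) ^ 2)
      = ((-1 : ℂ) ^ m * (-1 : ℂ) ^ m) *
        ∏ i, ∏ j ∈ Finset.univ.filter (fun j => i < j), (θ j - θ i) ^ 2 := by
        rw [hmm, one_mul]
    _ = (-1 : ℂ) ^ m * ((-1 : ℂ) ^ m *
        ∏ i, ∏ j ∈ Finset.univ.filter (fun j => i < j), (θ j - θ i) ^ 2) := by ring
    _ = (-1 : ℂ) ^ m * (((ℓ ^ n : ℕ) : ℂ) ^ (ℓ ^ n) * ((t : ℂ) ^ 2 - 4) ^ m) := by rw [hmain]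
    _ = ((ℓ ^ n : ℕ) : ℂ) ^ (ℓ ^ n) * ((-1 : ℂ) ^ m * ((t : ℂ) ^ 2 - 4) ^ m) := by ring
    _ = (ℓ : ℂ) ^ (n * ℓ ^ n) * (4 - (t : ℂ) ^ 2) ^ m := by rw [hneg, hcast]
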